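/- Let H_1 be an r_1-regular graph and suppose m − 1 = p(r_1 − 1) for some integer p, where p ≥ 3 and r_1 ≥ 2. Let G = G[F,V_k,H_v] and G* = G[F,V_k,H_v*] with |V_k| = k, where H_v* is the graph H_v whose deleted graph H_1 is replaced by G_p^{r_1} = C_p □ K_{r_1−1}. Let γ, δ be the two roots of (x − 2r_1 − 1)(x − m + 1) − (m − 1) = 0. Then the multiset σ(Q(G)) equals the union of: (a) each q ∈ σ(Q(H_v)) \ {γ, δ} taken with multiplicity k, and (b) the multiset obtained from σ(Q(G*)) by removing k copies of each value q_j(G_p^{r_1}) + 1, j = 1,…,m−2. -/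

import Mathlib

open Matrix BigOperators
open scoped Classical

/-- The adjacency matrix of a simple graph, with entries in `R`. -/
noncomputable def adjMat (R : Type*) [Zero R] [One R] {V : Type*} [Fintype V]
    (G : SimpleGraph V) : Matrix V V R :=
  Matrix.of fun x y => if G.Adj x y then (1 : R) else 0

/-- The degree of a vertex. -/
noncomputable def gdeg {V : Type*} [Fintype V] (G : SimpleGraph V) (x : V) : ℕ :=
  (Finset.univ.filter fun y => G.Adj x y).card

/-- `G` is `r`-regular. -/
def IsReg {V : Type*} [Fintype V] (G : SimpleGraph V) (r : ℕ) : Prop :=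
  ∀ x, gdeg G x = r

/-- The signless Laplacian matrix `Q(G) = D(G) + A(G)`. -/
noncomputable def qMat (R : Type*) [AddMonoidWithOne R] {V : Type*} [Fintype V]
    (G : SimpleGraph V) : Matrix V V R :=
  Matrix.diagonal (fun x => (gdeg G x : R)) + adjMat R G

/-- The adjacency spectrum, as the multiset of real roots (with multiplicity) of the
characteristic polynomial of the (real symmetric) adjacency matrix. -/
noncomputable def aSpec {V : Type*} [Fintype V] (G : SimpleGraph V) : Multiset ℝ :=
  (adjMat ℝ G).charpoly.roots

/-- The signless Laplacian spectrum. -/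
noncomputable def qSpec {V : Type*} [Fintype V] (G : SimpleGraph V) : Multiset ℝ :=
  (qMat ℝ G).charpoly.roots

/-- The `M`-coronal `Γ_M(x) = 1ᵀ (xI − M)⁻¹ 1`, the sum of the entries of `(xI − M)⁻¹`. -/
noncomputable def coronal {n R : Type*} [Fintype n] [DecidableEq n] [Field R]
    (M : Matrix n n R) (x : R) : R :=
  ∑ i, ∑ j, ((x • (1 : Matrix n n R) - M)⁻¹) i j

/-- Embeds a `P × P` matrix as a `V × V` matrix supported on the image of `g`, zero elsewhere.
If the vertices of `V` are ordered listing the image of `g` first, this is `diag(M, 0)`. -/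
noncomputable def embedMatrix {P V R : Type*} [Fintype P] [AddCommMonoid R]
    (g : P → V) (M : Matrix P P R) : Matrix V V R :=
  Matrix.of fun x y => ∑ px : P, ∑ py : P, if x = g px ∧ y = g py then M px py else 0

/-- The graph `H − v` obtained by deleting the vertex `v`. -/
def delVert {W : Type*} (H : SimpleGraph W) (v : W) : SimpleGraph {w : W // w ≠ v} :=
  H.comap Subtype.val

/-- The graph `H − {u,v}` obtained by deleting the two vertices `u, v`. -/
def delVert2 {W : Type*} (H : SimpleGraph W) (u v : W) :
    SimpleGraph {w : W // w ≠ u ∧ w ≠ v} :=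
  H.comap Subtype.val

/-- The join `G₁ ∨ G₂` of two vertex-disjoint graphs: their disjoint union together with all
edges between the two parts. -/
def sgJoin {α β : Type*} (G₁ : SimpleGraph α) (G₂ : SimpleGraph β) : SimpleGraph (α ⊕ β) where
  Adj x y :=
    match x, y with
    | Sum.inl a, Sum.inl b => G₁.Adj a b
    | Sum.inl _, Sum.inr _ => True
    | Sum.inr _, Sum.inl _ => True
    | Sum.inr a, Sum.inr b => G₂.Adj a b
  symm := by
    constructor
    rintro (a | a) (b | b) h
    · exact G₁.adj_symm h
    · trivial
    · trivial
    · exact G₂.adj_symm h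
  loopless := by
    constructor
    rintro (a | a) h
    · exact G₁.loopless.irrefl a h
    · exact G₂.loopless.irrefl a h

/-- The graph `G[F, V_k, H_v]` with `k` pockets: take one copy of `F` and `k` disjoint copies
of `H` (with specified vertex `v`), identifying the vertex `v` of the `i`-th copy with the
vertex `f i` of `F`.  The `i`-th copy of `H − v` is carried by `{i} × {w // w ≠ v}`. -/
def pocketGraph {V W : Type*} (F : SimpleGraph V) (H : SimpleGraph W) (v : W)
    {k : ℕ} (f : Fin k ↪ V) : SimpleGraph (V ⊕ (Fin k × {w : W // w ≠ v})) where
  Adj x y :=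
    match x, y with
    | Sum.inl a, Sum.inl b => F.Adj a b
    | Sum.inl a, Sum.inr (i, w) => a = f i ∧ H.Adj v w.1
    | Sum.inr (i, w), Sum.inl a => a = f i ∧ H.Adj v w.1
    | Sum.inr (i, w), Sum.inr (j, w') => i = j ∧ H.Adj w.1 w'.1
  symm := by
    constructor
    rintro (a | ⟨i, w⟩) (b | ⟨j, w'⟩) h
    · exact F.adj_symm h
    · exact h
    · exact h
    · exact ⟨h.1.symm, H.adj_symm h.2⟩
  loopless := by
    constructor
    rintro (a | ⟨i, w⟩) h
    · exact F.loopless.irrefl a h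
    · exact H.loopless.irrefl _ h.2

/-- The graph `G[F, E_k, H_{uv}]` with `k` edge-pockets: take one copy of `F` and `k` disjoint
copies of `H` (with specified edge `uv`), pasting the edge `uv` of the `i`-th copy onto the
edge `e_i = (a i)(b i)` of `F` (identifying `u` with `a i` and `v` with `b i`).  The `i`-th
copy of `H − {u,v}` is carried by `{i} × {w // w ≠ u ∧ w ≠ v}`. -/
def edgePocketGraph {V W : Type*} (F : SimpleGraph V) (H : SimpleGraph W) (u v : W)
    {k : ℕ} (a b : Fin k → V) :
    SimpleGraph (V ⊕ (Fin k × {w : W // w ≠ u ∧ w ≠ v})) where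
  Adj x y :=
    match x, y with
    | Sum.inl s, Sum.inl t => F.Adj s t
    | Sum.inl s, Sum.inr (i, w) => (s = a i ∧ H.Adj u w.1) ∨ (s = b i ∧ H.Adj v w.1)
    | Sum.inr (i, w), Sum.inl s => (s = a i ∧ H.Adj u w.1) ∨ (s = b i ∧ H.Adj v w.1)
    | Sum.inr (i, w), Sum.inr (j, w') => i = j ∧ H.Adj w.1 w'.1
  symm := by
    constructor
    rintro (s | ⟨i, w⟩) (t | ⟨j, w'⟩) h
    · exact F.adj_symm h
    · exact h
    · exact h
    · exact ⟨h.1.symm, H.adj_symm h.2⟩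
  loopless := by
    constructor
    rintro (s | ⟨i, w⟩) h
    · exact F.loopless.irrefl s h
    · exact H.loopless.irrefl _ h.2

set_option linter.unusedSectionVars false
set_option maxHeartbeats 1000000

open Polynomial

namespace PocketProof

variable {α β : Type*} [Fintype α] [Fintype β]

lemma eval_charpoly' [DecidableEq α] (M : Matrix α α ℝ) (x : ℝ) :
    eval x M.charpoly = det (x • (1 : Matrix α α ℝ) - M) := by
  rw [Matrix.charpoly, ← Polynomial.coe_evalRingHom, RingHom.map_det]
  congr 1
  ext i j
  by_cases h : i = j <;> simp [charmatrix_apply, h, Matrix.one_apply, Matrix.diagonal_apply, mul_comm]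

lemma herm_charpoly [DecidableEq α] (M : Matrix α α ℝ) (h : M.IsHermitian) :
    M.charpoly = ∏ i, (X - C (h.eigenvalues i)) := by
  apply Polynomial.eq_of_infinite_eval_eq
  have : {x : ℝ | eval x M.charpoly = eval x (∏ i, (X - C (h.eigenvalues i)))} = Set.univ := by
    apply Set.eq_univ_of_forall
    intro x
    simp only [Set.mem_setOf_eq, eval_charpoly', eval_prod, eval_sub, eval_X, eval_C]
    have hU : (h.eigenvectorUnitary : Matrix α α ℝ) * star (h.eigenvectorUnitary : Matrix α α ℝ) = 1 :=
      Matrix.mem_unitaryGroup_iff.mp h.eigenvectorUnitary.2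
    have hsp : M = (h.eigenvectorUnitary : Matrix α α ℝ) * Matrix.diagonal (RCLike.ofReal ∘ h.eigenvalues) * star (h.eigenvectorUnitary : Matrix α α ℝ) := h.spectral_theorem
    have hblk : x • (1 : Matrix α α ℝ) - M
        = (h.eigenvectorUnitary : Matrix α α ℝ) * (x • 1 - Matrix.diagonal (RCLike.ofReal ∘ h.eigenvalues))
          * star (h.eigenvectorUnitary : Matrix α α ℝ) := by
      rw [Matrix.mul_sub, Matrix.sub_mul, ← hsp]
      congr 1
      rw [Matrix.mul_smul, Matrix.mul_one, Matrix.smul_mul, hU]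
    rw [hblk, Matrix.det_mul, Matrix.det_mul]
    have hdet1 : det (h.eigenvectorUnitary : Matrix α α ℝ) * det (star (h.eigenvectorUnitary : Matrix α α ℝ)) = 1 := by
      rw [← Matrix.det_mul, hU, Matrix.det_one]
    calc det (h.eigenvectorUnitary : Matrix α α ℝ) * det (x • 1 - Matrix.diagonal (RCLike.ofReal ∘ h.eigenvalues)) * det (star (h.eigenvectorUnitary : Matrix α α ℝ))
        = det (x • (1 : Matrix α α ℝ) - Matrix.diagonal (RCLike.ofReal ∘ h.eigenvalues)) * (det (h.eigenvectorUnitary : Matrix α α ℝ) * det (star (h.eigenvectorUnitary : Matrix α α ℝ))) := by ring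
      _ = det (x • (1 : Matrix α α ℝ) - Matrix.diagonal (RCLike.ofReal ∘ h.eigenvalues)) := by rw [hdet1, mul_one]
      _ = ∏ i, (x - h.eigenvalues i) := by
          rw [show x • (1 : Matrix α α ℝ) - Matrix.diagonal (RCLike.ofReal ∘ h.eigenvalues)
              = Matrix.diagonal (fun i => x - h.eigenvalues i) by
            ext i j; by_cases hij : i = j <;> simp [Matrix.diagonal_apply, hij, Matrix.one_apply]]
          exact Matrix.det_diagonal
  rw [this]
  exact Set.infinite_univ

noncomputable def kron {w : Type*} (k : ℕ) (N : Matrix w w ℝ) : Matrix (Fin k × w) (Fin k × w) ℝ :=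
  Matrix.of fun a b => if a.1 = b.1 then N a.2 b.2 else 0

variable {w : Type*} [Fintype w] [DecidableEq w] {k : ℕ}

lemma kron_mul (M N : Matrix w w ℝ) : kron k M * kron k N = kron k (M * N) := by
  ext ⟨i, a⟩ ⟨j, b⟩
  simp only [kron, Matrix.mul_apply, Matrix.of_apply]
  rw [Fintype.sum_prod_type]
  by_cases hij : i = j
  · subst hij
    rw [if_pos rfl]
    rw [Finset.sum_eq_single i]
    · simp
    · intro l _ hl; simp [hl, Ne.symm hl]
    · simp
  · rw [if_neg hij]
    apply Finset.sum_eq_zero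
    intro l _
    apply Finset.sum_eq_zero
    intro c _
    by_cases h1 : i = l <;> by_cases h2 : l = j <;> simp_all

lemma kron_one : kron k (1 : Matrix w w ℝ) = 1 := by
  ext ⟨i, a⟩ ⟨j, b⟩
  simp only [kron, Matrix.of_apply, Matrix.one_apply, Prod.mk.injEq]
  by_cases hij : i = j <;> by_cases hab : a = b <;> simp [hij, hab, Prod.ext_iff]

lemma kron_det (N : Matrix w w ℝ) : (kron k N).det = N.det ^ k := by
  have : kron k N = (Matrix.blockDiagonal (fun _ : Fin k => N)).submatrix
      (Equiv.prodComm (Fin k) w) (Equiv.prodComm (Fin k) w) := by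
    ext ⟨i, a⟩ ⟨j, b⟩
    simp only [kron, Matrix.of_apply, Matrix.submatrix_apply, Equiv.prodComm_apply,
      Prod.swap_prod_mk]
    by_cases hij : i = j
    · subst hij
      rw [if_pos rfl, Matrix.blockDiagonal_apply_eq]
    · rw [if_neg hij, Matrix.blockDiagonal_apply_ne _ _ _ hij]
  rw [this, Matrix.det_submatrix_equiv_self, Matrix.det_blockDiagonal, Finset.prod_const,
    Finset.card_univ, Fintype.card_fin]

lemma kron_smul_one_sub (x : ℝ) (N : Matrix w w ℝ) :
    x • (1 : Matrix (Fin k × w) (Fin k × w) ℝ) - kron k N = kron k (x • 1 - N) := by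
  ext ⟨i, a⟩ ⟨j, b⟩
  simp only [kron, Matrix.sub_apply, Matrix.smul_apply, Matrix.of_apply, Matrix.one_apply,
    Prod.mk.injEq, smul_eq_mul]
  by_cases hij : i = j <;> by_cases hab : a = b <;> simp [hij, hab, Prod.ext_iff]

lemma kron_inv (N : Matrix w w ℝ) (h : N.det ≠ 0) : (kron k N)⁻¹ = kron k N⁻¹ := by
  apply Matrix.inv_eq_left_inv
  rw [kron_mul, Matrix.nonsing_inv_mul _ (Ne.isUnit h), kron_one]

lemma adjMat_apply (G : SimpleGraph α) (a b : α) :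
    adjMat ℝ G a b = if G.Adj a b then (1:ℝ) else 0 := rfl

lemma qMat_apply (G : SimpleGraph α) (a b : α) [DecidableEq α] :
    qMat ℝ G a b = (if a = b then (gdeg G a : ℝ) else 0) + (if G.Adj a b then (1:ℝ) else 0) := by
  simp only [qMat, Matrix.add_apply, adjMat_apply, Matrix.diagonal_apply]
  congr 1
  split <;> rfl

lemma adj_row_sum (G : SimpleGraph α) (a : α) :
    ∑ b, adjMat ℝ G a b = (gdeg G a : ℝ) := by
  simp only [adjMat_apply, gdeg]
  rw [Finset.sum_boole]

lemma gdeg_comap (e : α ≃ β) (G : SimpleGraph β) (a : α) :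
    gdeg (G.comap e) a = gdeg G (e a) := by
  unfold gdeg
  apply Finset.card_bij (fun b _ => e b)
  · intro b hb; simp only [Finset.mem_filter, Finset.mem_univ, true_and] at hb ⊢; exact hb
  · intro b _ c _ h; exact e.injective h
  · intro b hb
    refine ⟨e.symm b, ?_, by simp⟩
    simp only [Finset.mem_filter, Finset.mem_univ, true_and, SimpleGraph.comap_adj, Equiv.apply_symm_apply] at hb ⊢
    exact hb

lemma qMat_comap (e : α ≃ β) (G : SimpleGraph β) [DecidableEq α] [DecidableEq β] :
    qMat ℝ (G.comap e) = (qMat ℝ G).submatrix e e := by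
  ext a b
  simp only [qMat_apply, Matrix.submatrix_apply, SimpleGraph.comap_adj, gdeg_comap,
    EmbeddingLike.apply_eq_iff_eq]

lemma det_smul_one_sub_qMat_comap (e : α ≃ β) (G : SimpleGraph β) [DecidableEq α] [DecidableEq β] (x : ℝ) :
    det (x • (1 : Matrix α α ℝ) - qMat ℝ (G.comap e)) = det (x • (1 : Matrix β β ℝ) - qMat ℝ G) := by
  rw [qMat_comap e G]
  have : x • (1 : Matrix α α ℝ) - (qMat ℝ G).submatrix e e
      = (x • (1 : Matrix β β ℝ) - qMat ℝ G).submatrix e e := by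
    ext a b
    simp [Matrix.submatrix_apply, Matrix.one_apply, EmbeddingLike.apply_eq_iff_eq]
  rw [this, Matrix.det_submatrix_equiv_self]

lemma charpoly_qMat_comap (e : α ≃ β) (G : SimpleGraph β) [DecidableEq α] [DecidableEq β] :
    (qMat ℝ (G.comap e)).charpoly = (qMat ℝ G).charpoly := by
  rw [qMat_comap e G, ← Matrix.charpoly_reindex e]
  congr 1
  ext a b
  simp [Matrix.reindex_apply]

end PocketProof
namespace PocketProof

open Polynomial

section Pocket

variable {V W : Type*} [Fintype V] [DecidableEq V] [Fintype W] [DecidableEq W]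
variable (F : SimpleGraph V) (H : SimpleGraph W) (v : W) {k : ℕ} (f : Fin k ↪ V)

/-- diagonal indicator of the range of `f` -/
noncomputable def Ef (f : Fin k ↪ V) : Matrix V V ℝ :=
  Matrix.of fun a b => if a = b ∧ a ∈ Set.range f then (1:ℝ) else 0

lemma pocket_adj_inl_inl (a b : V) :
    (pocketGraph F H v f).Adj (Sum.inl a) (Sum.inl b) ↔ F.Adj a b := Iff.rfl

lemma pocket_adj_inl_inr (a : V) (q : Fin k × {w : W // w ≠ v}) :
    (pocketGraph F H v f).Adj (Sum.inl a) (Sum.inr q) ↔ (a = f q.1 ∧ H.Adj v q.2.1) := Iff.rfl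

lemma pocket_adj_inr_inl (a : V) (q : Fin k × {w : W // w ≠ v}) :
    (pocketGraph F H v f).Adj (Sum.inr q) (Sum.inl a) ↔ (a = f q.1 ∧ H.Adj v q.2.1) := Iff.rfl

lemma pocket_adj_inr_inr (q q' : Fin k × {w : W // w ≠ v}) :
    (pocketGraph F H v f).Adj (Sum.inr q) (Sum.inr q') ↔ (q.1 = q'.1 ∧ H.Adj q.2.1 q'.2.1) := Iff.rfl

lemma sum_indicator_range (a : V) :
    (∑ i : Fin k, if a = f i then (1:ℝ) else 0) = if a ∈ Set.range f then 1 else 0 := by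
  by_cases h : a ∈ Set.range f
  · obtain ⟨i₀, rfl⟩ := h
    rw [if_pos ⟨i₀, rfl⟩, Finset.sum_eq_single i₀]
    · simp
    · intro j _ hj
      rw [if_neg]
      intro hfj
      exact hj (f.injective hfj.symm)
    · simp
  · rw [if_neg h]
    apply Finset.sum_eq_zero
    intro i _
    rw [if_neg]
    intro hfi
    exact h ⟨i, hfi.symm⟩

lemma sum_indicator_range2 (a b : V) :
    (∑ i : Fin k, (if a = f i then (1:ℝ) else 0) * (if b = f i then (1:ℝ) else 0))
      = if a = b ∧ a ∈ Set.range f then 1 else 0 := by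
  by_cases hab : a = b
  · subst hab
    simp only [← mul_ite, mul_one, ite_mul, one_mul, zero_mul, mul_zero]
    rw [show (∑ i : Fin k, if a = f i then (if a = f i then (1:ℝ) else 0) else 0)
        = ∑ i : Fin k, if a = f i then (1:ℝ) else 0 by
      apply Finset.sum_congr rfl; intro i _; by_cases h : a = f i <;> simp [h]]
    rw [sum_indicator_range f a]
    simp
  · rw [if_neg (by tauto)]
    apply Finset.sum_eq_zero
    intro i _
    by_cases h1 : a = f i
    · rw [if_pos h1, one_mul, if_neg (fun h2 => hab (h1.trans h2.symm))]
    · simp [h1]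

lemma card_W' (m : ℕ) (hm : Fintype.card W = m) :
    Fintype.card {w : W // w ≠ v} = m - 1 := by
  simpa [hm, Fintype.card_subtype_eq] using Fintype.card_subtype_compl (fun w : W => w = v)

lemma B_row_sum (r₁ : ℕ) (hreg : IsReg (delVert H v) r₁) (w : {w : W // w ≠ v}) :
    ∑ w', (qMat ℝ (delVert H v) + 1) w w' = 2*(r₁:ℝ)+1 := by
  have h1 : ∀ w' : {w : W // w ≠ v}, (qMat ℝ (delVert H v) + 1) w w'
      = ((if w = w' then (gdeg (delVert H v) w : ℝ) else 0)
          + adjMat ℝ (delVert H v) w w') + (if w = w' then (1:ℝ) else 0) := by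
    intro w'
    rw [Matrix.add_apply, qMat_apply, Matrix.one_apply]
    rfl
  rw [Finset.sum_congr rfl fun w' _ => h1 w']
  simp only [Finset.sum_add_distrib, adj_row_sum, hreg w]
  rw [Finset.sum_ite_eq, Finset.sum_ite_eq]
  simp only [Finset.mem_univ, if_true]
  ring

variable (m r₁ : ℕ)

lemma pocket_deg_inl (hdeg : ∀ w : W, w ≠ v → H.Adj v w) (hm : Fintype.card W = m)
    (hm1 : 1 ≤ m) (a : V) :
    (gdeg (pocketGraph F H v f) (Sum.inl a) : ℝ)
      = (gdeg F a : ℝ) + ((m:ℝ)-1) * (if a ∈ Set.range f then 1 else 0) := by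
  rw [← adj_row_sum, Fintype.sum_sum_type]
  have h1 : ∑ b : V, adjMat ℝ (pocketGraph F H v f) (Sum.inl a) (Sum.inl b) = (gdeg F a : ℝ) := by
    rw [← adj_row_sum]
    apply Finset.sum_congr rfl
    intro b _
    simp [adjMat_apply, pocket_adj_inl_inl]
  have h2 : ∑ q : Fin k × {w : W // w ≠ v}, adjMat ℝ (pocketGraph F H v f) (Sum.inl a) (Sum.inr q)
      = ((m:ℝ)-1) * (if a ∈ Set.range f then 1 else 0) := by
    rw [Fintype.sum_prod_type]
    have : ∀ i : Fin k, ∑ w : {w : W // w ≠ v},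
        adjMat ℝ (pocketGraph F H v f) (Sum.inl a) (Sum.inr (i, w))
          = ((m:ℝ)-1) * (if a = f i then 1 else 0) := by
      intro i
      simp only [adjMat_apply, pocket_adj_inl_inr]
      have : ∀ w : {w : W // w ≠ v},
          (if a = f i ∧ H.Adj v w.1 then (1:ℝ) else 0) = if a = f i then 1 else 0 := by
        intro w
        by_cases h : a = f i <;> simp [h, hdeg w.1 w.2]
      rw [Finset.sum_congr rfl fun w _ => this w, Finset.sum_const, Finset.card_univ,
        card_W' v m hm]
      rw [nsmul_eq_mul, Nat.cast_sub hm1]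
      norm_num
    rw [Finset.sum_congr rfl fun i _ => this i, ← Finset.mul_sum, sum_indicator_range f a]
  rw [h1, h2]

lemma pocket_deg_inr (hdeg : ∀ w : W, w ≠ v → H.Adj v w)
    (hreg : IsReg (delVert H v) r₁) (q : Fin k × {w : W // w ≠ v}) :
    (gdeg (pocketGraph F H v f) (Sum.inr q) : ℝ) = (r₁ : ℝ) + 1 := by
  obtain ⟨i, w⟩ := q
  rw [← adj_row_sum, Fintype.sum_sum_type]
  have h1 : ∑ b : V, adjMat ℝ (pocketGraph F H v f) (Sum.inr (i,w)) (Sum.inl b) = 1 := by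
    simp only [adjMat_apply, pocket_adj_inr_inl]
    have : ∀ b : V, (if b = f i ∧ H.Adj v w.1 then (1:ℝ) else 0) = if b = f i then 1 else 0 := by
      intro b
      by_cases h : b = f i <;> simp [h, hdeg w.1 w.2]
    rw [Finset.sum_congr rfl fun b _ => this b]
    simp
  have h2 : ∑ q' : Fin k × {w : W // w ≠ v},
      adjMat ℝ (pocketGraph F H v f) (Sum.inr (i,w)) (Sum.inr q') = (r₁ : ℝ) := by
    rw [Fintype.sum_prod_type]
    rw [Finset.sum_eq_single i]
    · have : ∀ w' : {w : W // w ≠ v},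
          adjMat ℝ (pocketGraph F H v f) (Sum.inr (i,w)) (Sum.inr (i, w'))
            = adjMat ℝ (delVert H v) w w' := by
        intro w'
        simp [adjMat_apply, pocket_adj_inr_inr, delVert]
      rw [Finset.sum_congr rfl fun w' _ => this w', adj_row_sum, hreg w]
    · intro j _ hj
      apply Finset.sum_eq_zero
      intro w' _
      simp [adjMat_apply, pocket_adj_inr_inr, Ne.symm hj]
    · simp
  rw [h1, h2]
  ring

end Pocket

end PocketProof
namespace PocketProof

open Polynomial Matrix

section Schur

variable {V W : Type*} [Fintype V] [DecidableEq V] [Fintype W] [DecidableEq W]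
variable (F : SimpleGraph V) (H : SimpleGraph W) (v : W) {k : ℕ} (f : Fin k ↪ V)
variable (m r₁ : ℕ)

/-- off-diagonal block of `x•1 - Q(pocket)` -/
noncomputable def Bup (v : W) (f : Fin k ↪ V) : Matrix V (Fin k × {w : W // w ≠ v}) ℝ :=
  Matrix.of fun a q => if a = f q.1 then (-1:ℝ) else 0

noncomputable def Blo (v : W) (f : Fin k ↪ V) : Matrix (Fin k × {w : W // w ≠ v}) V ℝ :=
  Matrix.of fun q a => if a = f q.1 then (-1:ℝ) else 0

lemma pocket_block (hdeg : ∀ w : W, w ≠ v → H.Adj v w) (hreg : IsReg (delVert H v) r₁)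
    (hm : Fintype.card W = m) (hm1 : 1 ≤ m) (x : ℝ) :
    x • (1 : Matrix (V ⊕ (Fin k × {w : W // w ≠ v})) (V ⊕ (Fin k × {w : W // w ≠ v})) ℝ)
        - qMat ℝ (pocketGraph F H v f)
      = Matrix.fromBlocks
          (x • (1 : Matrix V V ℝ) - qMat ℝ F - ((m:ℝ)-1) • Ef f)
          (Bup v f) (Blo v f)
          (kron k (x • (1 : Matrix {w : W // w ≠ v} {w : W // w ≠ v} ℝ)
            - (qMat ℝ (delVert H v) + 1))) := by
  ext ab cd
  rcases ab with a | ⟨i, w⟩ <;> rcases cd with b | ⟨j, w'⟩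
  · -- inl inl
    simp only [Matrix.sub_apply, Matrix.smul_apply, Matrix.one_apply, fromBlocks_apply₁₁,
      Ef, Matrix.smul_apply, Matrix.of_apply, qMat_apply, smul_eq_mul,
      pocket_deg_inl F H v f m hdeg hm hm1, Sum.inl.injEq, pocket_adj_inl_inl]
    by_cases hab : a = b
    · subst hab
      by_cases hr : a ∈ Set.range f <;> simp [hr] <;> ring
    · simp [hab]
  · -- inl inr
    simp only [Matrix.sub_apply, Matrix.smul_apply, Matrix.one_apply, fromBlocks_apply₁₂,
      Bup, Matrix.of_apply, qMat_apply, smul_eq_mul, pocket_adj_inl_inr]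
    rw [if_neg (by simp)]
    rw [if_neg (by simp)]
    by_cases hb : a = f j
    · rw [if_pos hb, if_pos ⟨hb, hdeg w'.1 w'.2⟩]; ring
    · rw [if_neg hb, if_neg (by intro hc; exact hb hc.1)]; ring
  · -- inr inl
    simp only [Matrix.sub_apply, Matrix.smul_apply, Matrix.one_apply, fromBlocks_apply₂₁,
      Blo, Matrix.of_apply, qMat_apply, smul_eq_mul, pocket_adj_inr_inl]
    rw [if_neg (by simp)]
    rw [if_neg (by simp)]
    by_cases hb : b = f i
    · rw [if_pos hb, if_pos ⟨hb, hdeg w.1 w.2⟩]; ring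
    · rw [if_neg hb, if_neg (by intro hc; exact hb hc.1)]; ring
  · -- inr inr
    have hirr : ∀ u : W, ¬ H.Adj u u := fun u => H.loopless.irrefl u
    simp only [Matrix.sub_apply, Matrix.smul_apply, Matrix.one_apply, fromBlocks_apply₂₂,
      kron, Matrix.of_apply, Matrix.add_apply, qMat_apply, smul_eq_mul,
      pocket_deg_inr F H v f r₁ hdeg hreg, pocket_adj_inr_inr, Sum.inr.injEq, hreg]
    split_ifs <;> simp_all [Prod.ext_iff, delVert, SimpleGraph.comap_adj, IsReg] <;> push_cast <;> ring

end Schur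



end PocketProof
namespace PocketProof

open Polynomial Matrix

section Schur2

variable {V W : Type*} [Fintype V] [DecidableEq V] [Fintype W] [DecidableEq W]
variable (F : SimpleGraph V) (H : SimpleGraph W) (v : W) {k : ℕ} (f : Fin k ↪ V)
variable (m r₁ : ℕ)

lemma L1 (hdeg : ∀ w : W, w ≠ v → H.Adj v w) (hreg : IsReg (delVert H v) r₁)
    (hm : Fintype.card W = m) (hm1 : 1 ≤ m) (x : ℝ) (hxs : x ≠ 2*(r₁:ℝ)+1)
    (hD : det (x • (1 : Matrix {w : W // w ≠ v} {w : W // w ≠ v} ℝ)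
        - (qMat ℝ (delVert H v) + 1)) ≠ 0) :
    det (x • (1 : Matrix (V ⊕ (Fin k × {w : W // w ≠ v})) (V ⊕ (Fin k × {w : W // w ≠ v})) ℝ)
        - qMat ℝ (pocketGraph F H v f))
      = det (x • (1 : Matrix {w : W // w ≠ v} {w : W // w ≠ v} ℝ)
            - (qMat ℝ (delVert H v) + 1)) ^ k
        * det (x • (1 : Matrix V V ℝ) - qMat ℝ F
            - (((m:ℝ)-1) + ((m:ℝ)-1)/(x - (2*(r₁:ℝ)+1))) • Ef f) := by
  have hs : x - (2*(r₁:ℝ)+1) ≠ 0 := sub_ne_zero.mpr hxs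
  set N : Matrix {w : W // w ≠ v} {w : W // w ≠ v} ℝ
    := x • (1 : Matrix {w : W // w ≠ v} {w : W // w ≠ v} ℝ) - (qMat ℝ (delVert H v) + 1)
    with hNdef
  have hkd : (kron k N).det = N.det ^ k := kron_det N
  haveI : Invertible (kron (k := k) N) := by
    apply Matrix.invertibleOfIsUnitDet
    rw [hkd]
    exact (pow_ne_zero k hD).isUnit
  rw [pocket_block F H v f m r₁ hdeg hreg hm hm1 x, Matrix.det_fromBlocks₂₂, hkd]
  congr 1
  have hInv : ⅟(kron (k := k) N) = kron k N⁻¹ := by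
    rw [invOf_eq_nonsing_inv, kron_inv _ hD]
  have hNrow : ∀ w0, ∑ w', N w0 w' = x - (2*(r₁:ℝ)+1) := by
    intro w0
    simp only [hNdef, Matrix.sub_apply, Matrix.smul_apply, Matrix.one_apply, smul_eq_mul,
      Finset.sum_sub_distrib]
    rw [B_row_sum H v r₁ hreg w0]
    simp only [mul_ite, mul_one, mul_zero, Finset.sum_ite_eq, Finset.mem_univ, if_true]
  have hNinv_total : ∑ w0, ∑ w', N⁻¹ w0 w' = ((m:ℝ)-1) * (x - (2*(r₁:ℝ)+1))⁻¹ := by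
    have h1 : N *ᵥ (fun _ => (1:ℝ)) = fun _ => (x - (2*(r₁:ℝ)+1)) := by
      funext w0
      simp only [Matrix.mulVec, dotProduct, mul_one]
      exact hNrow w0
    have h2 : N⁻¹ *ᵥ (N *ᵥ (fun _ => (1:ℝ))) = fun _ => (1:ℝ) := by
      rw [Matrix.mulVec_mulVec, Matrix.nonsing_inv_mul _ (Ne.isUnit hD), Matrix.one_mulVec]
    rw [h1] at h2
    have hrow : ∀ w0, ∑ w', N⁻¹ w0 w' = (x - (2*(r₁:ℝ)+1))⁻¹ := by
      intro w0
      have h3 := congrFun h2 w0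
      simp only [Matrix.mulVec, dotProduct] at h3
      rw [← Finset.sum_mul] at h3
      field_simp at h3 ⊢
      linarith [h3]
    rw [Finset.sum_congr rfl fun w0 _ => hrow w0, Finset.sum_const, Finset.card_univ,
      card_W' v m hm, nsmul_eq_mul, Nat.cast_sub hm1, Nat.cast_one]
  have hprod : Bup v f * kron k N⁻¹ * Blo v f
      = (((m:ℝ)-1) / (x - (2*(r₁:ℝ)+1))) • Ef f := by
    ext a b
    have hstep : ∀ q' : Fin k × {w : W // w ≠ v},
        (Bup v f * kron k N⁻¹) a q'
          = (if a = f q'.1 then (-1:ℝ) else 0) * (∑ w0, N⁻¹ w0 q'.2) := by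
      intro q'
      rw [Matrix.mul_apply, Fintype.sum_prod_type]
      rw [Finset.sum_eq_single q'.1]
      · rw [Finset.mul_sum]
        apply Finset.sum_congr rfl
        intro w0 _
        simp [Bup, kron, Matrix.of_apply]
      · intro i _ hi
        apply Finset.sum_eq_zero
        intro w0 _
        simp only [Bup, kron, Matrix.of_apply, if_neg hi, mul_zero]
      · simp
    rw [Matrix.mul_apply, Finset.sum_congr rfl fun q' _ => by rw [hstep q']]
    rw [Fintype.sum_prod_type]
    have hj : ∀ j : Fin k, ∑ w' : {w : W // w ≠ v},
        (if a = f j then (-1:ℝ) else 0) * (∑ w0, N⁻¹ w0 w') * Blo v f (j, w') b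
          = ((if a = f j then (1:ℝ) else 0) * (if b = f j then (1:ℝ) else 0))
              * ∑ w' : {w : W // w ≠ v}, ∑ w0, N⁻¹ w0 w' := by
      intro j
      rw [Finset.mul_sum]
      apply Finset.sum_congr rfl
      intro w' _
      simp only [Blo, Matrix.of_apply]
      by_cases h1 : a = f j <;> by_cases h2 : b = f j <;> simp [h1, h2] <;> ring
    rw [Finset.sum_congr rfl fun j _ => hj j, ← Finset.sum_mul, sum_indicator_range2 f a b]
    rw [Finset.sum_comm, hNinv_total]
    simp only [Ef, Matrix.smul_apply, Matrix.of_apply, smul_eq_mul, div_eq_mul_inv]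
    by_cases hcond : a = b ∧ a ∈ Set.range f <;> simp [hcond] <;> ring
  rw [hInv, hprod]
  congr 1
  rw [add_smul]
  abel

end Schur2

end PocketProof
namespace PocketProof

open Polynomial Matrix

section Transfers

variable {β : Type*} [Fintype β] [DecidableEq β]

def eJoin (β : Type*) : {w : Unit ⊕ β // w ≠ Sum.inl ()} ≃ β where
  toFun w := match w with
    | ⟨Sum.inl (), h⟩ => absurd rfl h
    | ⟨Sum.inr x, _⟩ => x
  invFun x := ⟨Sum.inr x, Sum.inr_ne_inl⟩
  left_inv := by rintro ⟨(⟨⟩ | x), h⟩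
                 · exact absurd rfl h
                 · rfl
  right_inv x := rfl

lemma delVert_sgJoin (G2 : SimpleGraph β) :
    delVert (sgJoin (⊤ : SimpleGraph Unit) G2) (Sum.inl ()) = G2.comap (eJoin β) := by
  ext a b
  obtain ⟨(⟨⟩ | x), ha⟩ := a
  · exact absurd rfl ha
  obtain ⟨(⟨⟩ | y), hb⟩ := b
  · exact absurd rfl hb
  rfl

lemma hdeg_sgJoin (G2 : SimpleGraph β) :
    ∀ w : Unit ⊕ β, w ≠ Sum.inl () → (sgJoin (⊤ : SimpleGraph Unit) G2).Adj (Sum.inl ()) w := by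
  rintro (⟨⟩ | x) h
  · exact absurd rfl h
  · trivial

lemma isReg_delVert_sgJoin (G2 : SimpleGraph β) (r : ℕ) (h : IsReg G2 r) :
    IsReg (delVert (sgJoin (⊤ : SimpleGraph Unit) G2) (Sum.inl ())) r := by
  intro a
  rw [delVert_sgJoin, gdeg_comap]
  exact h _

variable {V W : Type*} [Fintype V] [DecidableEq V] [Fintype W] [DecidableEq W]
variable (H : SimpleGraph W) (v : W)

def fOne : Fin 1 ↪ Unit := ⟨fun _ => (), fun a b _ => Subsingleton.elim a b⟩

noncomputable def eTwo (v : W) : W ≃ (Unit ⊕ (Fin 1 × {w : W // w ≠ v})) where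
  toFun w := if h : w = v then Sum.inl () else Sum.inr (0, ⟨w, h⟩)
  invFun x := match x with
    | Sum.inl _ => v
    | Sum.inr (_, w) => w.1
  left_inv w := by by_cases h : w = v <;> simp [h]
  right_inv x := by
    rcases x with ⟨⟩ | ⟨i, w⟩
    · simp
    · have hi : i = 0 := Subsingleton.elim _ _
      subst hi
      simp only [dif_neg w.2]

lemma eTwo_v : eTwo v v = Sum.inl () := dif_pos rfl

lemma eTwo_ne {w : W} (h : w ≠ v) : eTwo v w = Sum.inr (0, ⟨w, h⟩) := dif_neg h

lemma H_eq_comap :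
    H = (pocketGraph (⊥ : SimpleGraph Unit) H v fOne).comap (eTwo v) := by
  ext a b
  simp only [SimpleGraph.comap_adj]
  by_cases ha : a = v <;> by_cases hb : b = v
  · rw [ha, hb, eTwo_v, pocket_adj_inl_inl]
    simp [SimpleGraph.irrefl]
  · rw [ha, eTwo_v, eTwo_ne v hb, pocket_adj_inl_inr]
    simp [fOne]
  · rw [hb, eTwo_v, eTwo_ne v ha, pocket_adj_inr_inl]
    simp only [fOne, Function.Embedding.coeFn_mk, true_and]
    exact SimpleGraph.adj_comm H a v
  · rw [eTwo_ne v ha, eTwo_ne v hb, pocket_adj_inr_inr]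
    simp

lemma qMat_rowsum_of_isReg {α : Type*} [Fintype α] (G : SimpleGraph α) (r : ℕ)
    (h : IsReg G r) (a : α) : ∑ b, qMat ℝ G a b = 2*(r:ℝ) := by
  simp only [qMat, Matrix.add_apply, Finset.sum_add_distrib, adj_row_sum, h a]
  rw [show ∑ b, Matrix.diagonal (fun x => (gdeg G x : ℝ)) a b = (gdeg G a : ℝ) by
    rw [Finset.sum_eq_single a]
    · simp
    · intro b _ hb
      simp only [Matrix.diagonal]
      rw [Matrix.of_apply, if_neg (Ne.symm hb)]
    · simp]
  rw [h a]
  ring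

lemma det_smul_one_sub_eq_zero_of_rowsum {α : Type*} [Fintype α] [DecidableEq α] [Nonempty α]
    (M : Matrix α α ℝ) (c : ℝ) (h : ∀ a, ∑ b, M a b = c) :
    det (c • (1 : Matrix α α ℝ) - M) = 0 := by
  rw [← Matrix.exists_mulVec_eq_zero_iff]
  refine ⟨fun _ => 1, ?_, ?_⟩
  · intro hz
    exact one_ne_zero (congrFun hz (Classical.arbitrary α))
  · funext a
    simp only [Matrix.mulVec, dotProduct, Matrix.sub_apply, Matrix.smul_apply,
      Matrix.one_apply, smul_eq_mul, mul_one, Finset.sum_sub_distrib, h a]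
    simp [Finset.sum_ite_eq]

lemma gdeg_boxProd {α γ : Type*} [Fintype α] [Fintype γ] [DecidableEq α] [DecidableEq γ]
    (G : SimpleGraph α) (G' : SimpleGraph γ) (a : α) (b : γ) :
    (gdeg (G.boxProd G') (a,b) : ℝ) = (gdeg G a : ℝ) + (gdeg G' b : ℝ) := by
  rw [← adj_row_sum, Fintype.sum_prod_type]
  have hc : ∀ c : α, ∑ d : γ, adjMat ℝ (G.boxProd G') (a,b) (c,d)
      = (if G.Adj a c then (1:ℝ) else 0) + (if a = c then (gdeg G' b : ℝ) else 0) := by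
    intro c
    by_cases hac : a = c
    · subst hac
      rw [if_neg (SimpleGraph.irrefl G), if_pos rfl, zero_add, ← adj_row_sum]
      apply Finset.sum_congr rfl
      intro d _
      simp only [adjMat_apply, SimpleGraph.boxProd_adj]
      by_cases hd : G'.Adj b d
      · rw [if_pos (Or.inr ⟨hd, by trivial⟩), if_pos hd]
      · rw [if_neg, if_neg hd]
        rintro (⟨hGa, _⟩ | ⟨hd', _⟩)
        · exact SimpleGraph.irrefl G hGa
        · exact hd hd'
    · rw [if_neg hac, add_zero]
      by_cases hadj : G.Adj a c
      · rw [if_pos hadj]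
        rw [Finset.sum_congr rfl (fun d _ => show adjMat ℝ (G.boxProd G') (a,b) (c,d)
            = if b = d then (1:ℝ) else 0 by
          simp only [adjMat_apply, SimpleGraph.boxProd_adj]
          by_cases hbd : b = d
          · rw [if_pos (Or.inl ⟨hadj, by exact hbd⟩), if_pos hbd]
          · rw [if_neg, if_neg hbd]
            rintro (⟨_, hbd'⟩ | ⟨_, hac'⟩)
            · exact hbd hbd'
            · exact hac hac')]
        simp [Finset.sum_ite_eq]
      · rw [if_neg hadj]
        apply Finset.sum_eq_zero
        intro d _
        simp only [adjMat_apply, SimpleGraph.boxProd_adj]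
        rw [if_neg]
        rintro (⟨hGa, _⟩ | ⟨_, hac'⟩)
        · exact hadj hGa
        · exact hac hac'
  rw [Finset.sum_congr rfl fun c _ => hc c, Finset.sum_add_distrib]
  have h2 := adj_row_sum G a
  simp only [adjMat_apply] at h2
  rw [h2]
  simp [Finset.sum_ite_eq]

lemma gdeg_congr_set {α : Type*} [Fintype α] (G : SimpleGraph α) (a : α) (s : Finset α)
    (h : ∀ y, G.Adj a y ↔ y ∈ s) : gdeg G a = s.card := by
  unfold gdeg
  congr 1
  ext y
  simp only [Finset.mem_filter, Finset.mem_univ, true_and]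
  exact h y

lemma gdeg_top {α : Type*} [Fintype α] [DecidableEq α] (a : α) :
    gdeg (⊤ : SimpleGraph α) a = Fintype.card α - 1 := by
  rw [gdeg_congr_set (⊤ : SimpleGraph α) a (Finset.univ.erase a)
    (fun y => by simp [SimpleGraph.top_adj, eq_comm, Ne])]
  rw [Finset.card_erase_of_mem (Finset.mem_univ a), Finset.card_univ]

lemma gdeg_cycle {p : ℕ} (hp : 3 ≤ p) (a : Fin p) :
    gdeg (SimpleGraph.cycleGraph p) a = 2 := by
  obtain ⟨n, rfl⟩ : ∃ n, p = n + 3 := ⟨p - 3, by omega⟩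
  rw [gdeg_congr_set (SimpleGraph.cycleGraph (n+3)) a
    ((SimpleGraph.cycleGraph (n+3)).neighborFinset a)
    (fun y => by simp [SimpleGraph.mem_neighborFinset])]
  exact SimpleGraph.cycleGraph_degree_three_le

lemma isReg_cycle_box_top {p r₁ : ℕ} (hp : 3 ≤ p) (hr : 2 ≤ r₁) :
    IsReg ((SimpleGraph.cycleGraph p).boxProd (⊤ : SimpleGraph (Fin (r₁ - 1)))) r₁ := by
  rintro ⟨a, b⟩
  have h := gdeg_boxProd (SimpleGraph.cycleGraph p) (⊤ : SimpleGraph (Fin (r₁-1))) a b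
  rw [gdeg_cycle hp, gdeg_top, Fintype.card_fin] at h
  have : ((gdeg ((SimpleGraph.cycleGraph p).boxProd (⊤ : SimpleGraph (Fin (r₁-1)))) (a,b) : ℝ))
      = (r₁ : ℝ) := by
    rw [h]
    have h1 : ((r₁ - 1 - 1 : ℕ) : ℝ) = (r₁ : ℝ) - 2 := by
      have : r₁ - 1 - 1 = r₁ - 2 := by omega
      rw [this, Nat.cast_sub hr]
      norm_num
    rw [h1]
    ring
  exact_mod_cast this

end Transfers

end PocketProof
namespace PocketProof

open Polynomial Matrix

section Assembly

lemma qSpec_eq {α : Type*} [Fintype α] [DecidableEq α] (G : SimpleGraph α) :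
    qSpec G = (qMat ℝ G).charpoly.roots := by
  unfold qSpec
  congr!

lemma poly_eq_on_cofinite (p q : ℝ[X]) (bad : Set ℝ) (hbad : bad.Finite)
    (h : ∀ x ∉ bad, eval x p = eval x q) : p = q := by
  apply Polynomial.eq_of_infinite_eval_eq
  apply Set.Infinite.mono (show badᶜ ⊆ {x | eval x p = eval x q} from fun x hx => h x hx)
  exact Set.Finite.infinite_compl hbad

lemma gdeg_bot_unit : gdeg (⊥ : SimpleGraph Unit) () = 0 := by
  simp [gdeg]

lemma unit_det (x c : ℝ) :
    det (x • (1 : Matrix Unit Unit ℝ) - qMat ℝ (⊥ : SimpleGraph Unit) - c • Ef fOne)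
      = x - c := by
  rw [Matrix.det_unique]
  have h1 : qMat ℝ (⊥ : SimpleGraph Unit) () () = 0 := by
    rw [qMat_apply]
    simp [gdeg_bot_unit]
  have h2 : Ef fOne () () = 1 := by
    rw [Ef, Matrix.of_apply, if_pos ⟨rfl, ⟨0, rfl⟩⟩]
  show (x • (1 : Matrix Unit Unit ℝ) - qMat ℝ (⊥ : SimpleGraph Unit) - c • Ef fOne) () () = x - c
  simp only [Matrix.sub_apply, Matrix.smul_apply, Matrix.one_apply_eq, h1, h2, smul_eq_mul,
    mul_one, sub_zero]

variable {α β : Type*} [Fintype α] [DecidableEq α] [Fintype β] [DecidableEq β]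

lemma qMat_isHermitian (G : SimpleGraph α) : (qMat ℝ G).IsHermitian := by
  ext i j
  simp only [Matrix.conjTranspose_apply, star_trivial]
  rw [qMat_apply, qMat_apply]
  congr 1
  · by_cases h : i = j
    · subst h; rfl
    · rw [if_neg h, if_neg (Ne.symm h)]
  · rw [SimpleGraph.adj_comm]

lemma charpoly_submatrix (e : α ≃ β) (M : Matrix β β ℝ) :
    (M.submatrix e e).charpoly = M.charpoly := by
  have : M.submatrix e e = (Matrix.reindex e.symm e.symm) M := by
    ext a b; simp [Matrix.reindex_apply]
  rw [this, Matrix.charpoly_reindex]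

lemma roots_charpoly_add_one (M : Matrix α α ℝ) (h : M.IsHermitian) :
    (M + 1).charpoly.roots = M.charpoly.roots.map (fun q => q + 1) := by
  have hM := herm_charpoly M h
  have hM1 : (M + 1).charpoly = ∏ i, (Polynomial.X - C (h.eigenvalues i + 1)) := by
    apply poly_eq_on_cofinite _ _ ∅ Set.finite_empty
    intro x _
    rw [eval_charpoly']
    have : x • (1 : Matrix α α ℝ) - (M + 1) = (x - 1) • (1 : Matrix α α ℝ) - M := by
      rw [sub_smul, one_smul]; abel
    rw [this, ← eval_charpoly', hM]
    simp only [eval_prod, eval_sub, eval_X, eval_C]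
    apply Finset.prod_congr rfl
    intro i _
    ring
  rw [hM, hM1]
  rw [Finset.prod_eq_multiset_prod, Finset.prod_eq_multiset_prod]
  rw [show (Finset.univ.val.map fun i => Polynomial.X - C (h.eigenvalues i))
      = ((Finset.univ.val.map h.eigenvalues).map fun a => Polynomial.X - C a) by
    rw [Multiset.map_map]; rfl]
  rw [show (Finset.univ.val.map fun i => Polynomial.X - C (h.eigenvalues i + 1))
      = (((Finset.univ.val.map h.eigenvalues).map (fun q => q + 1)).map fun a => Polynomial.X - C a) by
    rw [Multiset.map_map, Multiset.map_map]; rfl]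
  rw [Polynomial.roots_multiset_prod_X_sub_C, Polynomial.roots_multiset_prod_X_sub_C]

lemma roots_charpoly_herm (M : Matrix α α ℝ) (h : M.IsHermitian) :
    M.charpoly.roots = Finset.univ.val.map h.eigenvalues := by
  rw [herm_charpoly M h, Finset.prod_eq_multiset_prod,
    show (Finset.univ.val.map fun i => Polynomial.X - C (h.eigenvalues i))
      = ((Finset.univ.val.map h.eigenvalues).map fun a => Polynomial.X - C a) by
    rw [Multiset.map_map]; rfl]
  exact Polynomial.roots_multiset_prod_X_sub_C _

section NPdef

variable {V W : Type*} [Fintype V] [DecidableEq V]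
variable (F : SimpleGraph V) {k : ℕ} (f : Fin k ↪ V) (m r₁ : ℕ)

noncomputable def NP : Matrix V V ℝ[X] :=
  Matrix.of fun a b =>
    if a ∈ Set.range f
      then (Polynomial.X - C (2*(r₁:ℝ)+1)) * ((if a = b then (Polynomial.X : ℝ[X]) else 0) - C (qMat ℝ F a b))
        - (if a = b then (C ((m:ℝ)-1) * (Polynomial.X - C (2*(r₁:ℝ)+1)) + C ((m:ℝ)-1)) else 0)
      else ((if a = b then (Polynomial.X : ℝ[X]) else 0) - C (qMat ℝ F a b))

lemma card_filter_range : (Finset.univ.filter (fun a : V => a ∈ Set.range f)).card = k := by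
  rw [show Finset.univ.filter (fun a : V => a ∈ Set.range f) = Finset.univ.image f by
    ext a
    simp [Set.mem_range, eq_comm]]
  rw [Finset.card_image_of_injective _ f.injective, Finset.card_univ, Fintype.card_fin]

lemma eval_det_NP (x : ℝ) (hxs : x ≠ 2*(r₁:ℝ)+1) :
    eval x (NP F f m r₁).det
      = (x - (2*(r₁:ℝ)+1))^k
        * det (x • (1 : Matrix V V ℝ) - qMat ℝ F
            - (((m:ℝ)-1) + ((m:ℝ)-1)/(x - (2*(r₁:ℝ)+1))) • Ef f) := by
  have hs : x - (2*(r₁:ℝ)+1) ≠ 0 := sub_ne_zero.mpr hxs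
  rw [← Polynomial.coe_evalRingHom, RingHom.map_det]
  have hfact : (NP F f m r₁).map (eval x)
      = Matrix.diagonal (fun a : V => if a ∈ Set.range f then (x - (2*(r₁:ℝ)+1)) else 1)
        * (x • (1 : Matrix V V ℝ) - qMat ℝ F
            - (((m:ℝ)-1) + ((m:ℝ)-1)/(x - (2*(r₁:ℝ)+1))) • Ef f) := by
    ext a b
    rw [Matrix.map_apply, Matrix.diagonal_mul]
    simp only [NP, Matrix.of_apply, Matrix.sub_apply, Matrix.smul_apply, Matrix.one_apply,
      Ef, smul_eq_mul]
    by_cases hr : a ∈ Set.range f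
    · rw [if_pos hr, if_pos hr]
      by_cases hab : a = b
      · subst hab
        rw [if_pos (show a = a from rfl), if_pos (show a = a from rfl),
            if_pos (show a = a from rfl),
            if_pos (show a = a ∧ a ∈ Set.range f from ⟨rfl, hr⟩)]
        simp only [eval_sub, eval_mul, eval_add, eval_X, eval_C, eval_one]
        field_simp
      · rw [if_neg hab, if_neg hab, if_neg hab,
            if_neg (show ¬(a = b ∧ a ∈ Set.range f) from fun hc => hab hc.1)]
        simp only [zero_sub, eval_sub, eval_mul, eval_X, eval_C, eval_neg, eval_zero]
        ring
    · rw [if_neg hr, if_neg hr,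
          show (if a = b ∧ a ∈ Set.range f then (1:ℝ) else 0) = 0 from
            if_neg (fun hc => hr hc.2)]
      by_cases hab : a = b
      · subst hab
        rw [if_pos (show a = a from rfl), if_pos (show a = a from rfl)]
        simp only [eval_sub, eval_X, eval_C]
        ring
      · rw [if_neg hab, if_neg hab]
        simp only [zero_sub, eval_neg, eval_C]
        ring
  rw [RingHom.mapMatrix_apply, Polynomial.coe_evalRingHom, hfact, Matrix.det_mul, Matrix.det_diagonal]
  congr 1
  rw [Finset.prod_ite, Finset.prod_const, Finset.prod_const_one, mul_one, card_filter_range]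

end NPdef

end Assembly

end PocketProof
open Polynomial in
/-- Corollary 3.8. -/
theorem signlessLap_spec_pocketGraph_vs_cycleCompleteModel
    {V W : Type*} [Fintype V] [DecidableEq V] [Fintype W] [DecidableEq W]
    (m k p r₁ : ℕ) (hm : Fintype.card W = m) (hp : 3 ≤ p) (hr₁ : 2 ≤ r₁)
    (hmp : m - 1 = p * (r₁ - 1))
    (F : SimpleGraph V) (H : SimpleGraph W) (v : W)
    (hdeg : ∀ w : W, w ≠ v → H.Adj v w)
    (hreg : IsReg (delVert H v) r₁)
    (f : Fin k ↪ V)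
    (γ δ : ℝ)
    (hγδ : ∀ x : ℝ,
      (x - (2 * (r₁ : ℝ) + 1)) * (x - ((m : ℝ) - 1)) - ((m : ℝ) - 1) = (x - γ) * (x - δ)) :
    qSpec (pocketGraph F H v f)
      = k • (((qSpec H).erase γ).erase δ)
        + (qSpec (pocketGraph F
              (sgJoin (⊤ : SimpleGraph Unit)
                ((SimpleGraph.cycleGraph p).boxProd (⊤ : SimpleGraph (Fin (r₁ - 1)))))
              (Sum.inl ()) f)
            - k • (((qSpec ((SimpleGraph.cycleGraph p).boxProd
                (⊤ : SimpleGraph (Fin (r₁ - 1))))).erase (2 * (r₁ : ℝ))).map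
                  fun q => q + 1)) := by
  classical
  open PocketProof in
  have hm1 : 1 ≤ m := by
    have h0 : 0 < Fintype.card W := Fintype.card_pos_iff.mpr ⟨v⟩
    omega
  have h3 : 3 ≤ m - 1 := by
    have h1 : 1 ≤ r₁ - 1 := by omega
    have h2 : 3 * 1 ≤ p * (r₁ - 1) := Nat.mul_le_mul hp h1
    omega
  set Gp := (SimpleGraph.cycleGraph p).boxProd (⊤ : SimpleGraph (Fin (r₁ - 1))) with hGpdef
  set Hst := sgJoin (⊤ : SimpleGraph Unit) Gp with hHstdef
  have hregGp : IsReg Gp r₁ := isReg_cycle_box_top hp hr₁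
  have hmst : Fintype.card (Unit ⊕ (Fin p × Fin (r₁ - 1))) = m := by
    rw [Fintype.card_sum, Fintype.card_prod, Fintype.card_fin, Fintype.card_fin,
      Fintype.card_unit]
    omega
  have hdegst : ∀ w : Unit ⊕ (Fin p × Fin (r₁ - 1)), w ≠ Sum.inl () → Hst.Adj (Sum.inl ()) w :=
    hdeg_sgJoin Gp
  have hregst : IsReg (delVert Hst (Sum.inl ())) r₁ := isReg_delVert_sgJoin Gp r₁ hregGp
  set B : Matrix {w : W // w ≠ v} {w : W // w ≠ v} ℝ := qMat ℝ (delVert H v) + 1 with hBdef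
  set Bst := qMat ℝ (delVert Hst (Sum.inl ())) + 1 with hBstdef
  set D := B.charpoly with hDdef
  set Dst := Bst.charpoly with hDstdef
  have hD0 : D ≠ 0 := (Matrix.charpoly_monic B).ne_zero
  have hDst0 : Dst ≠ 0 := (Matrix.charpoly_monic Bst).ne_zero
  haveI hW'ne : Nonempty {w : W // w ≠ v} := by
    apply Fintype.card_pos_iff.mp
    rw [card_W' v m hm]
    omega
  have hsD : (2*(r₁:ℝ)+1) ∈ D.roots := by
    rw [Polynomial.mem_roots']
    refine ⟨hD0, ?_⟩
    rw [Polynomial.IsRoot, hDdef, eval_charpoly']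
    exact det_smul_one_sub_eq_zero_of_rowsum B _ (B_row_sum H v r₁ hreg)
  have hherm : (qMat ℝ Gp).IsHermitian := qMat_isHermitian Gp
  have hDst_eq : Dst.roots = (qSpec Gp).map (fun q => q + 1) := by
    have h1 : Bst = ((qMat ℝ Gp) + 1).submatrix (eJoin _) (eJoin _) := by
      rw [hBstdef, show delVert Hst (Sum.inl ()) = Gp.comap (eJoin _) from delVert_sgJoin Gp,
        qMat_comap]
      ext a b
      simp [Matrix.submatrix_apply, Matrix.add_apply, Matrix.one_apply,
        (eJoin (Fin p × Fin (r₁ - 1))).injective.eq_iff]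
    rw [hDstdef, h1, charpoly_submatrix, roots_charpoly_add_one _ hherm, qSpec_eq]
  have h2r : (2*(r₁:ℝ)) ∈ qSpec Gp := by
    haveI hXTne : Nonempty (Fin p × Fin (r₁-1)) := ⟨(⟨0, by omega⟩, ⟨0, by omega⟩)⟩
    rw [qSpec_eq]
    rw [Polynomial.mem_roots']
    refine ⟨(Matrix.charpoly_monic _).ne_zero, ?_⟩
    rw [Polynomial.IsRoot, eval_charpoly']
    exact det_smul_one_sub_eq_zero_of_rowsum _ _ (fun a => qMat_rowsum_of_isReg Gp r₁ hregGp a)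
  have hsDst : (2*(r₁:ℝ)+1) ∈ Dst.roots := by
    rw [hDst_eq]
    exact Multiset.mem_map.mpr ⟨2*(r₁:ℝ), h2r, rfl⟩
  obtain ⟨g, hg⟩ : ((X : ℝ[X]) - C (2*(r₁:ℝ)+1)) ∣ D :=
    Polynomial.dvd_iff_isRoot.mpr ((Polynomial.mem_roots'.mp hsD).2)
  obtain ⟨gst, hgst⟩ : ((X : ℝ[X]) - C (2*(r₁:ℝ)+1)) ∣ Dst :=
    Polynomial.dvd_iff_isRoot.mpr ((Polynomial.mem_roots'.mp hsDst).2)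
  have hg0 : g ≠ 0 := fun h => hD0 (by rw [hg, h, mul_zero])
  have hgst0 : gst ≠ 0 := fun h => hDst0 (by rw [hgst, h, mul_zero])
  have hrootsD : D.roots = (2*(r₁:ℝ)+1) ::ₘ g.roots := by
    rw [hg, Polynomial.roots_mul (hg ▸ hD0), Polynomial.roots_X_sub_C, Multiset.singleton_add]
  have hrootsDst : Dst.roots = (2*(r₁:ℝ)+1) ::ₘ gst.roots := by
    rw [hgst, Polynomial.roots_mul (hgst ▸ hDst0), Polynomial.roots_X_sub_C,
      Multiset.singleton_add]
  have hTst : gst.roots = ((qSpec Gp).erase (2*(r₁:ℝ))).map (fun q => q + 1) := by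
    have hcons := Multiset.cons_erase h2r
    have h2 : Dst.roots
        = (2*(r₁:ℝ)+1) ::ₘ ((qSpec Gp).erase (2*(r₁:ℝ))).map (fun q => q+1) := by
      rw [hDst_eq]
      conv_lhs => rw [← hcons]
      rw [Multiset.map_cons]
    rw [hrootsDst] at h2
    exact (Multiset.cons_inj_right _).mp h2
  -- the cone identity
  have hγδpoly : (qMat ℝ H).charpoly * ((X : ℝ[X]) - C (2*(r₁:ℝ)+1))
      = D * (((X : ℝ[X]) - C γ) * ((X : ℝ[X]) - C δ)) := by
    apply poly_eq_on_cofinite _ _ ({x | Polynomial.IsRoot D x} ∪ {2*(r₁:ℝ)+1})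
      ((Polynomial.finite_setOf_isRoot hD0).union (Set.finite_singleton _))
    intro x hx
    simp only [Set.mem_union, Set.mem_setOf_eq, Set.mem_singleton_iff, not_or] at hx
    obtain ⟨hx1, hx2⟩ := hx
    have hDx : det (x • (1 : Matrix {w : W // w ≠ v} {w : W // w ≠ v} ℝ) - B) ≠ 0 := by
      rw [← eval_charpoly']
      exact hx1
    simp only [eval_mul, eval_sub, eval_X, eval_C]
    have ht : eval x (qMat ℝ H).charpoly
        = det (x • 1 - qMat ℝ (pocketGraph (⊥ : SimpleGraph Unit) H v fOne)) := by
      rw [eval_charpoly',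
        show qMat ℝ H = qMat ℝ ((pocketGraph (⊥ : SimpleGraph Unit) H v fOne).comap (eTwo v))
          from congrArg _ (H_eq_comap H v),
        det_smul_one_sub_qMat_comap]
    rw [ht, L1 (⊥ : SimpleGraph Unit) H v fOne m r₁ hdeg hreg hm hm1 x hx2 hDx, unit_det,
      pow_one]
    rw [show eval x D = det (x • (1 : Matrix {w : W // w ≠ v} {w : W // w ≠ v} ℝ) - B)
      from eval_charpoly' B x]
    rw [← hγδ x]
    have hs : x - (2*(r₁:ℝ)+1) ≠ 0 := sub_ne_zero.mpr hx2
    have halg : (x - ((m:ℝ)-1 + ((m:ℝ)-1)/(x - (2*(r₁:ℝ)+1)))) * (x - (2*(r₁:ℝ)+1))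
        = (x - (2*(r₁:ℝ)+1)) * (x - ((m:ℝ)-1)) - ((m:ℝ)-1) := by
      field_simp
      ring
    rw [mul_assoc, halg]
  have hspecH : qSpec H = γ ::ₘ δ ::ₘ g.roots := by
    rw [qSpec_eq]
    have hΦH0 : (qMat ℝ H).charpoly ≠ 0 := (Matrix.charpoly_monic _).ne_zero
    have hXs0 : ((X : ℝ[X]) - C (2*(r₁:ℝ)+1)) ≠ 0 := Polynomial.X_sub_C_ne_zero _
    have hγ0 : ((X : ℝ[X]) - C γ) ≠ 0 := Polynomial.X_sub_C_ne_zero _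
    have hδ0 : ((X : ℝ[X]) - C δ) ≠ 0 := Polynomial.X_sub_C_ne_zero _
    have h1 := congrArg Polynomial.roots hγδpoly
    rw [Polynomial.roots_mul (mul_ne_zero hΦH0 hXs0),
      Polynomial.roots_mul (mul_ne_zero hD0 (mul_ne_zero hγ0 hδ0)),
      Polynomial.roots_mul (mul_ne_zero hγ0 hδ0), Polynomial.roots_X_sub_C,
      Polynomial.roots_X_sub_C, Polynomial.roots_X_sub_C, hrootsD] at h1
    have h2 : ((2*(r₁:ℝ)+1) ::ₘ g.roots) + ({γ} + {δ})
        = (γ ::ₘ δ ::ₘ g.roots) + {2*(r₁:ℝ)+1} := by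
      rw [← Multiset.singleton_add, ← Multiset.singleton_add, ← Multiset.singleton_add]
      abel
    rw [h2] at h1
    exact add_right_cancel h1
  have hAh : ((qSpec H).erase γ).erase δ = g.roots := by
    rw [hspecH, Multiset.erase_cons_head, Multiset.erase_cons_head]
  -- the two pocket identities
  set P := (NP F f m r₁).det with hPdef
  have hpolyG : (qMat ℝ (pocketGraph F H v f)).charpoly * ((X : ℝ[X]) - C (2*(r₁:ℝ)+1))^k
      = P * D^k := by
    apply poly_eq_on_cofinite _ _ ({x | Polynomial.IsRoot D x} ∪ {2*(r₁:ℝ)+1})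
      ((Polynomial.finite_setOf_isRoot hD0).union (Set.finite_singleton _))
    intro x hx
    simp only [Set.mem_union, Set.mem_setOf_eq, Set.mem_singleton_iff, not_or] at hx
    obtain ⟨hx1, hx2⟩ := hx
    have hDx : det (x • (1 : Matrix {w : W // w ≠ v} {w : W // w ≠ v} ℝ) - B) ≠ 0 := by
      rw [← eval_charpoly']
      exact hx1
    simp only [eval_mul, eval_pow, eval_sub, eval_X, eval_C]
    rw [eval_charpoly', L1 F H v f m r₁ hdeg hreg hm hm1 x hx2 hDx, hPdef,
      eval_det_NP F f m r₁ x hx2]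
    rw [show eval x D = det (x • (1 : Matrix {w : W // w ≠ v} {w : W // w ≠ v} ℝ) - B)
      from eval_charpoly' B x]
    ring
  have hpolyGst : (qMat ℝ (pocketGraph F Hst (Sum.inl ()) f)).charpoly
        * ((X : ℝ[X]) - C (2*(r₁:ℝ)+1))^k
      = P * Dst^k := by
    apply poly_eq_on_cofinite _ _ ({x | Polynomial.IsRoot Dst x} ∪ {2*(r₁:ℝ)+1})
      ((Polynomial.finite_setOf_isRoot hDst0).union (Set.finite_singleton _))
    intro x hx
    simp only [Set.mem_union, Set.mem_setOf_eq, Set.mem_singleton_iff, not_or] at hx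
    obtain ⟨hx1, hx2⟩ := hx
    have hDx : det (x • (1 : Matrix {w : Unit ⊕ (Fin p × Fin (r₁-1)) // w ≠ Sum.inl ()}
        {w : Unit ⊕ (Fin p × Fin (r₁-1)) // w ≠ Sum.inl ()} ℝ) - Bst) ≠ 0 := by
      rw [← eval_charpoly']
      exact hx1
    simp only [eval_mul, eval_pow, eval_sub, eval_X, eval_C]
    rw [eval_charpoly', L1 F Hst (Sum.inl ()) f m r₁ hdegst hregst hmst hm1 x hx2 hDx, hPdef,
      eval_det_NP F f m r₁ x hx2]
    rw [show eval x Dst = det (x • (1 : Matrix {w : Unit ⊕ (Fin p × Fin (r₁-1)) // w ≠ Sum.inl ()}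
        {w : Unit ⊕ (Fin p × Fin (r₁-1)) // w ≠ Sum.inl ()} ℝ) - Bst)
      from eval_charpoly' Bst x]
    ring
  have hXk : (((X : ℝ[X]) - C (2*(r₁:ℝ)+1)))^k ≠ 0 :=
    pow_ne_zero _ (Polynomial.X_sub_C_ne_zero _)
  have hG_fact : (qMat ℝ (pocketGraph F H v f)).charpoly = P * g^k := by
    apply mul_right_cancel₀ hXk
    rw [hpolyG, hg, mul_pow]
    ring
  have hGst_fact : (qMat ℝ (pocketGraph F Hst (Sum.inl ()) f)).charpoly = P * gst^k := by
    apply mul_right_cancel₀ hXk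
    rw [hpolyGst, hgst, mul_pow]
    ring
  have hq1 : qSpec (pocketGraph F H v f) = P.roots + k • g.roots := by
    rw [qSpec_eq, hG_fact, Polynomial.roots_mul (hG_fact ▸ (Matrix.charpoly_monic _).ne_zero),
      Polynomial.roots_pow]
  have hq2 : qSpec (pocketGraph F Hst (Sum.inl ()) f) = P.roots + k • gst.roots := by
    rw [qSpec_eq, hGst_fact, Polynomial.roots_mul (hGst_fact ▸ (Matrix.charpoly_monic _).ne_zero),
      Polynomial.roots_pow]
  rw [hq1, hq2, hAh, ← hTst, add_tsub_cancel_right, add_comm]
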